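/- Let 𝒫 be the credal set Conv({P₁,...,P_S}) of pmfs on a finite set Y. Define TU(𝒫) = sup_{P∈𝒫} H(P), AU(𝒫) = inf_{P∈𝒫} H(P), and EU(𝒫) = TU(𝒫) − AU(𝒫). Then EU(𝒫) ≤ max_s H(P_s) + log₂(S) − min_s H(P_s), and EU(𝒫) ≥ max{0, max_s H(P_s) − min_s H(P_s)}. -/

import Mathlib

/-- Shannon entropy (base 2) of a pmf on a finite set. -/
noncomputable def entropy {Y : Type*} [Fintype Y] (p : Y → ℝ) : ℝ :=
  -∑ y, p y * Real.logb 2 (p y)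

/-- The finitely generated credal set `Conv({P₁,...,P_S})`: all convex combinations. -/
def credal {Y : Type*} [Fintype Y] {S : ℕ} (P : Fin S → Y → ℝ) : Set (Y → ℝ) :=
  {p | ∃ β : Fin S → ℝ, (∀ s, 0 ≤ β s) ∧ ∑ s, β s = 1 ∧ p = fun y => ∑ s, β s * P s y}

lemma entropy_eq {Y : Type*} [Fintype Y] (p : Y → ℝ) :
    entropy p = (∑ y, Real.negMulLog (p y)) / Real.log 2 := by
  simp only [entropy, Real.logb, Real.negMulLog, Finset.sum_div, ← Finset.sum_neg_distrib]
  congr 1; ext y; ring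

lemma negMulLog_sum_le {ι : Type*} (t : Finset ι) (f : ι → ℝ) (hf : ∀ i ∈ t, 0 ≤ f i) :
    Real.negMulLog (∑ i ∈ t, f i) ≤ ∑ i ∈ t, Real.negMulLog (f i) := by
  have hT : Real.negMulLog (∑ i ∈ t, f i)
      = ∑ i ∈ t, (-(f i) * Real.log (∑ j ∈ t, f j)) := by
    simp [Real.negMulLog, ← Finset.sum_mul, Finset.sum_neg_distrib]
  rw [hT]
  refine Finset.sum_le_sum fun i hi => ?_
  rcases eq_or_lt_of_le (hf i hi) with h0 | h0
  · simp [Real.negMulLog, ← h0]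
  · have hle : f i ≤ ∑ j ∈ t, f j := Finset.single_le_sum hf hi
    have := Real.log_le_log h0 hle
    rw [Real.negMulLog]
    nlinarith

lemma sum_negMulLog_le_log_card {S : ℕ} (hS : 0 < S) (β : Fin S → ℝ)
    (hβ0 : ∀ s, 0 ≤ β s) (hβ1 : ∑ s, β s = 1) :
    ∑ s, Real.negMulLog (β s) ≤ Real.log S := by
  have hSR : (0:ℝ) < S := by exact_mod_cast hS
  have key : ∀ s : Fin S, Real.negMulLog (β s) ≤ β s * Real.log S + (1 / S - β s) := by
    intro s
    rcases eq_or_lt_of_le (hβ0 s) with h0 | h0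
    · have : (0:ℝ) ≤ Real.log S := by
        apply Real.log_nonneg; exact_mod_cast hS
      rw [Real.negMulLog, ← h0]
      simp
    · have hpos : 0 < β s * S := by positivity
      have := Real.log_le_sub_one_of_pos (x := (β s * S)⁻¹) (by positivity)
      rw [Real.log_inv] at this
      have hlog : Real.log (β s * S) = Real.log (β s) + Real.log S :=
        Real.log_mul (ne_of_gt h0) (ne_of_gt hSR)
      have hinv : (β s * S)⁻¹ = 1 / S / β s := by field_simp
      rw [Real.negMulLog]
      have hmul := mul_le_mul_of_nonneg_left this (le_of_lt h0)
      rw [hinv] at hmul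
      have : β s * (1 / S / β s) = 1 / S := by field_simp
      nlinarith
  calc ∑ s, Real.negMulLog (β s) ≤ ∑ s, (β s * Real.log S + (1 / S - β s)) :=
        Finset.sum_le_sum fun s _ => key s
    _ = Real.log S := by
        rw [Finset.sum_add_distrib, ← Finset.sum_mul, hβ1, Finset.sum_sub_distrib, hβ1]
        simp [Finset.sum_const, Finset.card_univ]
        field_simp
        ring

lemma mix_entropy_lower {Y : Type*} [Fintype Y] {S : ℕ} (P : Fin S → Y → ℝ)
    (hP0 : ∀ s y, 0 ≤ P s y) (β : Fin S → ℝ) (hβ0 : ∀ s, 0 ≤ β s) (hβ1 : ∑ s, β s = 1) :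
    ∑ s, β s * (∑ y, Real.negMulLog (P s y))
      ≤ ∑ y, Real.negMulLog (∑ s, β s * P s y) := by
  have swap : ∑ s, β s * (∑ y, Real.negMulLog (P s y))
      = ∑ y, ∑ s, β s * Real.negMulLog (P s y) := by
    rw [Finset.sum_comm (s := Finset.univ) (t := Finset.univ)
      (f := fun y s => β s * Real.negMulLog (P s y))]
    simp [Finset.mul_sum]
  rw [swap]
  refine Finset.sum_le_sum fun y _ => ?_
  have := Real.concaveOn_negMulLog.le_map_sum (t := Finset.univ)
    (w := β) (p := fun s => P s y) (fun s _ => hβ0 s) hβ1 (fun s _ => hP0 s y)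
  simpa [smul_eq_mul] using this

lemma mix_entropy_upper {Y : Type*} [Fintype Y] {S : ℕ} (P : Fin S → Y → ℝ)
    (hP0 : ∀ s y, 0 ≤ P s y) (hP1 : ∀ s, ∑ y, P s y = 1)
    (β : Fin S → ℝ) (hβ0 : ∀ s, 0 ≤ β s) :
    ∑ y, Real.negMulLog (∑ s, β s * P s y)
      ≤ ∑ s, Real.negMulLog (β s) + ∑ s, β s * (∑ y, Real.negMulLog (P s y)) := by
  have step1 : ∀ y : Y, Real.negMulLog (∑ s, β s * P s y)
      ≤ ∑ s, (P s y * Real.negMulLog (β s) + β s * Real.negMulLog (P s y)) := by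
    intro y
    calc Real.negMulLog (∑ s, β s * P s y) ≤ ∑ s, Real.negMulLog (β s * P s y) :=
          negMulLog_sum_le _ _ (fun s _ => mul_nonneg (hβ0 s) (hP0 s y))
      _ = ∑ s, (P s y * Real.negMulLog (β s) + β s * Real.negMulLog (P s y)) := by
          simp [Real.negMulLog_mul]
  calc ∑ y, Real.negMulLog (∑ s, β s * P s y)
      ≤ ∑ y, ∑ s, (P s y * Real.negMulLog (β s) + β s * Real.negMulLog (P s y)) :=
        Finset.sum_le_sum fun y _ => step1 y
    _ = ∑ s, Real.negMulLog (β s) + ∑ s, β s * (∑ y, Real.negMulLog (P s y)) := by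
        rw [Finset.sum_comm (s := Finset.univ) (t := Finset.univ)
          (f := fun y s => P s y * Real.negMulLog (β s) + β s * Real.negMulLog (P s y))]
        rw [← Finset.sum_add_distrib]
        refine Finset.sum_congr rfl fun s _ => ?_
        rw [Finset.sum_add_distrib, ← Finset.sum_mul, hP1 s, ← Finset.mul_sum, one_mul]

/-- Bounds on the epistemic uncertainty `EU(𝒫) = TU(𝒫) − AU(𝒫)` of a finitely
generated credal set. -/
theorem stmt_19 {Y : Type*} [Fintype Y] (S : ℕ) (hS : 0 < S) (P : Fin S → Y → ℝ)
    (hP0 : ∀ s y, 0 ≤ P s y) (hP1 : ∀ s, ∑ y, P s y = 1) :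
    sSup {h : ℝ | ∃ p ∈ credal P, h = entropy p}
        - sInf {h : ℝ | ∃ p ∈ credal P, h = entropy p}
      ≤ Finset.univ.sup' (Finset.univ_nonempty_iff.mpr (Fin.pos_iff_nonempty.mp hS))
            (fun s => entropy (P s)) + Real.logb 2 S
        - Finset.univ.inf' (Finset.univ_nonempty_iff.mpr (Fin.pos_iff_nonempty.mp hS))
            (fun s => entropy (P s)) ∧
    max 0 (Finset.univ.sup' (Finset.univ_nonempty_iff.mpr (Fin.pos_iff_nonempty.mp hS))
            (fun s => entropy (P s))
        - Finset.univ.inf' (Finset.univ_nonempty_iff.mpr (Fin.pos_iff_nonempty.mp hS))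
            (fun s => entropy (P s)))
      ≤ sSup {h : ℝ | ∃ p ∈ credal P, h = entropy p}
        - sInf {h : ℝ | ∃ p ∈ credal P, h = entropy p} := by
  have hne' : (Finset.univ : Finset (Fin S)).Nonempty :=
    Finset.univ_nonempty_iff.mpr (Fin.pos_iff_nonempty.mp hS)
  set E := {h : ℝ | ∃ p ∈ credal P, h = entropy p} with hE
  set U := Finset.univ.sup' hne' (fun s => entropy (P s)) with hU
  set L := Finset.univ.inf' hne' (fun s => entropy (P s)) with hL
  have hlog2 : (0:ℝ) < Real.log 2 := Real.log_pos one_lt_two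
  -- each P s is in the credal set
  have hPmem : ∀ s, entropy (P s) ∈ E := by
    intro s
    refine ⟨P s, ⟨fun t => if t = s then 1 else 0, fun t => by positivity, by simp, ?_⟩, rfl⟩
    funext y
    simp [Finset.sum_ite_eq', ite_mul]
  -- upper bound for every element of E
  have hub : ∀ h ∈ E, h ≤ U + Real.logb 2 S := by
    rintro h ⟨p, ⟨β, hβ0, hβ1, rfl⟩, rfl⟩
    have h1 := mix_entropy_upper P hP0 hP1 β hβ0
    have h2 := sum_negMulLog_le_log_card hS β hβ0 hβ1
    have h3 : ∑ s, β s * (∑ y, Real.negMulLog (P s y)) ≤ ∑ s, β s * (U * Real.log 2) := by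
      refine Finset.sum_le_sum fun s _ => mul_le_mul_of_nonneg_left ?_ (hβ0 s)
      have hle : entropy (P s) ≤ U := hU ▸ Finset.le_sup' (fun s => entropy (P s)) (Finset.mem_univ s)
      rw [entropy_eq] at hle
      calc ∑ y, Real.negMulLog (P s y)
          = (∑ y, Real.negMulLog (P s y)) / Real.log 2 * Real.log 2 := by field_simp
        _ ≤ U * Real.log 2 := mul_le_mul_of_nonneg_right hle hlog2.le
    have h4 : ∑ s, β s * (U * Real.log 2) = U * Real.log 2 := by
      rw [← Finset.sum_mul, hβ1, one_mul]
    have heq : U + Real.logb 2 S = (U * Real.log 2 + Real.log S) / Real.log 2 := by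
      rw [Real.logb]; field_simp
    rw [entropy_eq, heq, div_le_div_iff_of_pos_right hlog2]
    linarith
  -- lower bound for every element of E
  have hlb : ∀ h ∈ E, L ≤ h := by
    rintro h ⟨p, ⟨β, hβ0, hβ1, rfl⟩, rfl⟩
    have h1 := mix_entropy_lower P hP0 β hβ0 hβ1
    have h3 : ∑ s, β s * (L * Real.log 2) ≤ ∑ s, β s * (∑ y, Real.negMulLog (P s y)) := by
      refine Finset.sum_le_sum fun s _ => mul_le_mul_of_nonneg_left ?_ (hβ0 s)
      have hle : L ≤ entropy (P s) := hL ▸ Finset.inf'_le (fun s => entropy (P s)) (Finset.mem_univ s)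
      rw [entropy_eq] at hle
      calc L * Real.log 2 ≤ (∑ y, Real.negMulLog (P s y)) / Real.log 2 * Real.log 2 :=
            mul_le_mul_of_nonneg_right hle hlog2.le
        _ = ∑ y, Real.negMulLog (P s y) := by field_simp
    have h4 : ∑ s, β s * (L * Real.log 2) = L * Real.log 2 := by
      rw [← Finset.sum_mul, hβ1, one_mul]
    rw [entropy_eq, le_div_iff₀ hlog2]
    nlinarith
  have hEne : E.Nonempty := ⟨_, hPmem ⟨0, hS⟩⟩
  have hbddA : BddAbove E := ⟨U + Real.logb 2 S, hub⟩
  have hbddB : BddBelow E := ⟨L, hlb⟩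
  constructor
  · have h1 : sSup E ≤ U + Real.logb 2 S := csSup_le hEne hub
    have h2 : L ≤ sInf E := le_csInf hEne hlb
    linarith
  · refine max_le ?_ ?_
    · have := csInf_le_csSup hEne hbddB hbddA
      linarith
    · have h1 : U ≤ sSup E := by
        refine Finset.sup'_le hne' _ fun s _ => le_csSup hbddA (hPmem s)
      have h2 : sInf E ≤ L := by
        obtain ⟨s, _, hs⟩ := Finset.exists_mem_eq_inf' hne' (fun s => entropy (P s))
        rw [hL, hs]
        exact csInf_le hbddB (hPmem s)
      linarith
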